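/- Let n ≥ 2, 1 ≤ p < n, and let α, β, α' ∈ ℝ satisfy αp > 1−n, (α+β)p > −n, and α' > α. Then for every constant C > 0 there exists a continuously differentiable function u : ℝⁿ → ℝ with compact support such that (∫_{ℝⁿ} (|x|^β |x'|^α |u(x)|)^p dx)^{1/p} > C (∫_{ℝⁿ} (|x|^{β+α−α'} |x'|^{α'+1} |∇u(x)|)^p dx)^{1/p}; i.e., the Hardy-type inequality fails in general when α' > α. -/

import Mathlib

open MeasureTheory Metric

/-- The Euclidean norm of the first `n-1` coordinates of `x ∈ ℝⁿ`. -/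
noncomputable def primeNorm {n : ℕ} (x : EuclideanSpace ℝ (Fin n)) : ℝ :=
  Real.sqrt (∑ i : Fin n, if (i : ℕ) + 1 < n then x i ^ 2 else 0)

noncomputable def pproj {n : ℕ} (x : EuclideanSpace ℝ (Fin n)) : EuclideanSpace ℝ (Fin n) :=
  (WithLp.equiv 2 _).symm (fun i => if (i : ℕ) + 1 < n then x i else 0)

lemma pproj_apply {n : ℕ} (x : EuclideanSpace ℝ (Fin n)) (i : Fin n) :
    pproj x i = if (i : ℕ) + 1 < n then x i else 0 := rfl

lemma primeNorm_nonneg {n : ℕ} (x : EuclideanSpace ℝ (Fin n)) : 0 ≤ primeNorm x :=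
  Real.sqrt_nonneg _

lemma primeNorm_eq {n : ℕ} (x : EuclideanSpace ℝ (Fin n)) : primeNorm x = ‖pproj x‖ := by
  rw [EuclideanSpace.norm_eq, primeNorm]
  congr 1
  apply Finset.sum_congr rfl
  intro i _
  rw [pproj_apply, Real.norm_eq_abs, sq_abs]
  split <;> simp

lemma pproj_add {n : ℕ} (x y : EuclideanSpace ℝ (Fin n)) :
    pproj (x + y) = pproj x + pproj y := by
  ext i
  simp [pproj_apply]
  split <;> simp

lemma norm_pproj_le {n : ℕ} (x : EuclideanSpace ℝ (Fin n)) : ‖pproj x‖ ≤ ‖x‖ := by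
  rw [EuclideanSpace.norm_eq, EuclideanSpace.norm_eq]
  apply Real.sqrt_le_sqrt
  apply Finset.sum_le_sum
  intro i _
  rw [pproj_apply]
  split
  · exact le_refl _
  · simpa using sq_nonneg ‖x i‖

lemma primeNorm_le_add {n : ℕ} (x y : EuclideanSpace ℝ (Fin n)) :
    primeNorm x ≤ primeNorm y + ‖x - y‖ := by
  rw [primeNorm_eq, primeNorm_eq]
  calc ‖pproj x‖ = ‖pproj y + pproj (x - y)‖ := by
        rw [← pproj_add, add_sub_cancel]
    _ ≤ ‖pproj y‖ + ‖pproj (x - y)‖ := norm_add_le _ _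
    _ ≤ ‖pproj y‖ + ‖x - y‖ := by linarith [norm_pproj_le (x - y)]

lemma rpow_interval {lo a hi t : ℝ} (hlo : 0 < lo) (h1 : lo ≤ a) (h2 : a ≤ hi) :
    min (lo ^ t) (hi ^ t) ≤ a ^ t ∧ a ^ t ≤ max (lo ^ t) (hi ^ t) := by
  rcases le_or_gt 0 t with ht | ht
  · exact ⟨(min_le_left _ _).trans (Real.rpow_le_rpow hlo.le h1 ht),
      (Real.rpow_le_rpow (hlo.trans_le h1).le h2 ht).trans (le_max_right _ _)⟩
  · exact ⟨(min_le_right _ _).trans (Real.rpow_le_rpow_of_nonpos (hlo.trans_le h1) h2 ht.le),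
      (Real.rpow_le_rpow_of_nonpos hlo h1 ht.le).trans (le_max_left _ _)⟩

lemma primeNorm_center {n : ℕ} (hn : 2 ≤ n) (a : ℝ) (ha : 0 ≤ a) :
    primeNorm ((EuclideanSpace.single (⟨0, by omega⟩ : Fin n) a
      + EuclideanSpace.single (⟨n - 1, by omega⟩ : Fin n) 1 : EuclideanSpace ℝ (Fin n))) = a := by
  set i₀ : Fin n := ⟨0, by omega⟩
  set iL : Fin n := ⟨n - 1, by omega⟩
  set c : EuclideanSpace ℝ (Fin n) :=
    EuclideanSpace.single i₀ a + EuclideanSpace.single iL 1 with hc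
  rw [primeNorm]
  have key : ∀ i : Fin n,
      (if (i : ℕ) + 1 < n then (c i) ^ 2 else 0) = if i = i₀ then a ^ 2 else 0 := by
    intro i
    have happ : c i = (if i = i₀ then a else 0) + (if i = iL then 1 else 0) := by
      rw [hc]
      simp [PiLp.add_apply, EuclideanSpace.single_apply]
    rw [happ]
    have h0L : i₀ ≠ iL := by
      intro h; have := congrArg Fin.val h; simp [i₀, iL] at this; omega
    by_cases h0 : i = i₀
    · have h1 : (i : ℕ) + 1 < n := by rw [h0]; simp [i₀]; omega
      have hne : i ≠ iL := h0 ▸ h0L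
      simp [h1, h0, hne, h0L]
      intro h; exact absurd h (by omega)
    · by_cases hl : i = iL
      · have h1 : ¬((i : ℕ) + 1 < n) := by rw [hl]; simp [iL]; omega
        simp [h1, h0]
      · simp [h0, hl]
  rw [Finset.sum_congr rfl (fun i _ => key i), Finset.sum_ite_eq' Finset.univ _ (fun _ => a ^ 2)]
  simp [Real.sqrt_sq ha]

set_option maxHeartbeats 1000000 in
theorem stmt1 (n : ℕ) (hn : 2 ≤ n) (p α β α' : ℝ) (hp1 : 1 ≤ p) (hpn : p < n)
    (hα : α * p > 1 - n) (hαβ : (α + β) * p > -(n : ℝ)) (hα' : α' > α) :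
    ∀ C > 0, ∃ u : EuclideanSpace ℝ (Fin n) → ℝ,
      ContDiff ℝ 1 u ∧ HasCompactSupport u ∧
      (∫⁻ x, ENNReal.ofReal ((‖x‖ ^ β * primeNorm x ^ α * |u x|) ^ p)) ^ (1 / p)
        > ENNReal.ofReal C *
          (∫⁻ x, ENNReal.ofReal
              ((‖x‖ ^ (β + α - α') * primeNorm x ^ (α' + 1) * ‖fderiv ℝ u x‖) ^ p)) ^ (1 / p) := by
  intro C hC
  haveI : Nonempty (Fin n) := ⟨⟨0, by omega⟩⟩
  have hp0 : (0:ℝ) < p := lt_of_lt_of_le one_pos hp1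
  -- the bump function
  set f : ContDiffBump (0 : EuclideanSpace ℝ (Fin n)) := ⟨1/2, 1, by norm_num, by norm_num⟩ with hf_def
  have hf1 : ContDiff ℝ 1 ⇑f := f.contDiff
  have hcs_f : HasCompactSupport ⇑f := by
    apply IsCompact.of_isClosed_subset (isCompact_closedBall (0:EuclideanSpace ℝ (Fin n)) 1)
      (isClosed_closure)
    exact closure_minimal (by rw [f.support_eq]; exact ball_subset_closedBall) isClosed_closedBall
  obtain ⟨M₀, hM₀⟩ := (hcs_f.fderiv ℝ).exists_bound_of_continuous (hf1.continuous_fderiv one_ne_zero)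
  set M : ℝ := max M₀ 1 with hM_def
  have hM : ∀ y, ‖fderiv ℝ (⇑f) y‖ ≤ M := fun y => (hM₀ y).trans (le_max_left _ _)
  have hM1 : (0:ℝ) < M := lt_of_lt_of_le one_pos (le_max_right _ _)
  -- constants
  set mβ : ℝ := min ((1/2:ℝ) ^ β) ((2:ℝ) ^ β) with hmβ_def
  set a₀ : ℝ := min 1 ((3:ℝ) ^ α) with ha₀_def
  set Mγ : ℝ := max ((1/2:ℝ) ^ (β + α - α')) ((2:ℝ) ^ (β + α - α')) with hMγ_def
  set b₀ : ℝ := max 1 ((3:ℝ) ^ (α' + 1)) with hb₀_def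
  have hmβ : 0 < mβ := lt_min (Real.rpow_pos_of_pos (by norm_num) _) (Real.rpow_pos_of_pos (by norm_num) _)
  have ha₀ : 0 < a₀ := lt_min one_pos (Real.rpow_pos_of_pos (by norm_num) _)
  have hMγ : 0 < Mγ := lt_of_lt_of_le (Real.rpow_pos_of_pos (by norm_num) _) (le_max_left _ _)
  have hb₀ : 0 < b₀ := lt_of_lt_of_le one_pos (le_max_left _ _)
  set q : ℝ := (α' - α) * p with hq_def
  have hq : 0 < q := mul_pos (by linarith) hp0
  set K : ℝ := ((mβ * a₀) ^ p * (1/2:ℝ) ^ n) / (C ^ p * (Mγ * b₀ * M) ^ p * (2:ℝ) ^ n) with hK_def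
  have hc₁ : 0 < C ^ p * (Mγ * b₀ * M) ^ p * (2:ℝ) ^ n :=
    mul_pos (mul_pos (Real.rpow_pos_of_pos hC p)
      (Real.rpow_pos_of_pos (mul_pos (mul_pos hMγ hb₀) hM1) p)) (by positivity)
  have hc₂ : 0 < (mβ * a₀) ^ p * (1/2:ℝ) ^ n :=
    mul_pos (Real.rpow_pos_of_pos (mul_pos hmβ ha₀) p) (by positivity)
  have hK : 0 < K := div_pos hc₂ hc₁
  -- the scale δ
  set δ : ℝ := min (1/6) (K ^ (1/q) / 2) with hδ_def
  have hδ0 : 0 < δ := lt_min (by norm_num) (by positivity)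
  have hδ6 : δ ≤ 1/6 := min_le_left _ _
  have hδq : δ ^ q < K := by
    have hδlt : δ < K ^ (1/q) := by
      have h2 := Real.rpow_pos_of_pos hK (1/q)
      calc δ ≤ K ^ (1/q) / 2 := min_le_right _ _
        _ < K ^ (1/q) := by linarith
    have h := Real.rpow_lt_rpow hδ0.le hδlt hq
    rwa [← Real.rpow_mul hK.le, one_div_mul_cancel hq.ne', Real.rpow_one] at h
  -- the center
  set c : EuclideanSpace ℝ (Fin n) := EuclideanSpace.single (⟨0, by omega⟩ : Fin n) (2*δ)
      + EuclideanSpace.single (⟨n - 1, by omega⟩ : Fin n) 1 with hc_def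
  have hpnc : primeNorm c = 2*δ := primeNorm_center hn _ (by positivity)
  have hnc_ub : ‖c‖ ≤ 1 + 2*δ := by
    calc ‖c‖ ≤ ‖EuclideanSpace.single (⟨0, by omega⟩ : Fin n) (2*δ)‖
        + ‖EuclideanSpace.single (⟨n - 1, by omega⟩ : Fin n) (1:ℝ)‖ := norm_add_le _ _
      _ = |2*δ| + |(1:ℝ)| := by rw [EuclideanSpace.norm_single, EuclideanSpace.norm_single,
            Real.norm_eq_abs, Real.norm_eq_abs]
      _ = 1 + 2*δ := by rw [abs_of_pos (by linarith), abs_one]; ring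
  have hnc_lb : 1 - 2*δ ≤ ‖c‖ := by
    have h1 : ‖EuclideanSpace.single (⟨n - 1, by omega⟩ : Fin n) (1:ℝ)‖
        ≤ ‖c‖ + ‖EuclideanSpace.single (⟨0, by omega⟩ : Fin n) (2*δ)‖ := by
      calc ‖EuclideanSpace.single (⟨n - 1, by omega⟩ : Fin n) (1:ℝ)‖
          = ‖c - EuclideanSpace.single (⟨0, by omega⟩ : Fin n) (2*δ)‖ := by
            rw [hc_def]; congr 1; abel
        _ ≤ ‖c‖ + ‖EuclideanSpace.single (⟨0, by omega⟩ : Fin n) (2*δ)‖ := norm_sub_le _ _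
    rw [EuclideanSpace.norm_single, EuclideanSpace.norm_single, Real.norm_eq_abs,
      Real.norm_eq_abs, abs_one, abs_of_pos (by linarith : (0:ℝ) < 2*δ)] at h1
    linarith
  -- bounds on the annular region
  have hxb : ∀ x ∈ closedBall c δ,
      1/2 ≤ ‖x‖ ∧ ‖x‖ ≤ 2 ∧ δ ≤ primeNorm x ∧ primeNorm x ≤ 3*δ := by
    intro x hx
    rw [mem_closedBall, dist_eq_norm] at hx
    have hn1 : ‖x‖ - ‖c‖ ≤ ‖x - c‖ := norm_sub_norm_le x c
    have hn2 : ‖c‖ - ‖x‖ ≤ ‖x - c‖ := by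
      have := norm_sub_norm_le c x
      rwa [norm_sub_rev] at this
    have hp1' : primeNorm x ≤ primeNorm c + ‖x - c‖ := primeNorm_le_add x c
    have hp2' : primeNorm c ≤ primeNorm x + ‖x - c‖ := by
      have := primeNorm_le_add c x
      rwa [norm_sub_rev] at this
    rw [hpnc] at hp1' hp2'
    exact ⟨by linarith, by linarith, by linarith, by linarith⟩
  -- the test function
  set u : EuclideanSpace ℝ (Fin n) → ℝ := fun x => f (δ⁻¹ • (x - c)) with hu_def
  have hu1 : ContDiff ℝ 1 u :=
    hf1.comp (((contDiff_id.sub contDiff_const).const_smul δ⁻¹))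
  have hnorm_scale : ∀ x : EuclideanSpace ℝ (Fin n), ‖δ⁻¹ • (x - c)‖ = δ⁻¹ * ‖x - c‖ := by
    intro x
    rw [norm_smul, Real.norm_eq_abs, abs_of_pos (by positivity)]
  have huone : ∀ x ∈ closedBall c (δ/2), u x = 1 := by
    intro x hx
    rw [mem_closedBall, dist_eq_norm] at hx
    apply f.one_of_mem_closedBall
    rw [mem_closedBall_zero_iff, hnorm_scale]
    have : δ⁻¹ * ‖x - c‖ ≤ δ⁻¹ * (δ/2) := mul_le_mul_of_nonneg_left hx (by positivity)
    calc δ⁻¹ * ‖x - c‖ ≤ δ⁻¹ * (δ/2) := this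
      _ = 1/2 := by field_simp
      _ = f.rIn := rfl
  have hu0 : ∀ x, x ∉ closedBall c δ → u x = 0 := by
    intro x hx
    rw [mem_closedBall, dist_eq_norm, not_le] at hx
    have : δ⁻¹ • (x - c) ∉ Function.support ⇑f := by
      rw [f.support_eq]
      rw [mem_ball_zero_iff, not_lt, hnorm_scale]
      show f.rOut ≤ δ⁻¹ * ‖x - c‖
      have h1 : δ * δ⁻¹ ≤ ‖x - c‖ * δ⁻¹ := mul_le_mul_of_nonneg_right hx.le (by positivity)
      rw [mul_inv_cancel₀ hδ0.ne'] at h1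
      calc f.rOut = (1:ℝ) := rfl
        _ ≤ ‖x - c‖ * δ⁻¹ := h1
        _ = δ⁻¹ * ‖x - c‖ := mul_comm _ _
    exact Function.notMem_support.mp this
  have hcs : HasCompactSupport u := HasCompactSupport.intro (isCompact_closedBall c δ) hu0
  have htsupp : tsupport u ⊆ closedBall c δ := by
    apply closure_minimal ?_ isClosed_closedBall
    intro x hx
    by_contra h
    exact hx (hu0 x h)
  have hfd0 : ∀ x, x ∉ closedBall c δ → fderiv ℝ u x = 0 := by
    intro x hx
    have hxt : x ∉ tsupport u := fun h => hx (htsupp h)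
    exact Function.notMem_support.mp (fun h => hxt (support_fderiv_subset ℝ h))
  have hfd : ∀ x, ‖fderiv ℝ u x‖ ≤ M / δ := by
    intro x
    have hg : HasFDerivAt (fun x : EuclideanSpace ℝ (Fin n) => δ⁻¹ • (x - c))
        (δ⁻¹ • ContinuousLinearMap.id ℝ (EuclideanSpace ℝ (Fin n))) x :=
      ((hasFDerivAt_id x).sub_const c).const_smul δ⁻¹
    have hfx : HasFDerivAt (⇑f) (fderiv ℝ (⇑f) (δ⁻¹ • (x - c))) (δ⁻¹ • (x - c)) :=
      (((f.contDiff (n := 1)).differentiable (by norm_num)) _).hasFDerivAt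
    have hu' : HasFDerivAt u
        ((fderiv ℝ (⇑f) (δ⁻¹ • (x - c))).comp (δ⁻¹ • ContinuousLinearMap.id ℝ (EuclideanSpace ℝ (Fin n)))) x := HasFDerivAt.comp (g := (⇑f : EuclideanSpace ℝ (Fin n) → ℝ)) x hfx hg
    rw [hu'.fderiv]
    calc ‖(fderiv ℝ (⇑f) (δ⁻¹ • (x - c))).comp (δ⁻¹ • ContinuousLinearMap.id ℝ (EuclideanSpace ℝ (Fin n)))‖
        ≤ ‖fderiv ℝ (⇑f) (δ⁻¹ • (x - c))‖ * ‖δ⁻¹ • ContinuousLinearMap.id ℝ (EuclideanSpace ℝ (Fin n))‖ :=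
          ContinuousLinearMap.opNorm_comp_le _ _
      _ ≤ M * (|δ⁻¹| * 1) := by
          apply mul_le_mul (hM (δ⁻¹ • (x - c))) _ (norm_nonneg _)
            ((norm_nonneg _).trans (hM (δ⁻¹ • (x - c))))
          refine (norm_smul_le δ⁻¹ (ContinuousLinearMap.id ℝ (EuclideanSpace ℝ (Fin n)))).trans ?_
          rw [Real.norm_eq_abs]
          exact mul_le_mul_of_nonneg_left ContinuousLinearMap.norm_id_le (abs_nonneg _)
      _ = M / δ := by rw [abs_of_pos (by positivity : (0:ℝ) < δ⁻¹)]; field_simp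
  refine ⟨u, hu1, hcs, ?_⟩
  -- abbreviations
  set Lb : ℝ := mβ * a₀ * δ ^ α with hLb_def
  set Ub : ℝ := Mγ * b₀ * M * δ ^ α' with hUb_def
  have hLb : 0 < Lb := mul_pos (mul_pos hmβ ha₀) (Real.rpow_pos_of_pos hδ0 α)
  have hUb : 0 < Ub := mul_pos (mul_pos (mul_pos hMγ hb₀) hM1) (Real.rpow_pos_of_pos hδ0 α')
  set V : ENNReal := volume (ball (0 : EuclideanSpace ℝ (Fin n)) 1) with hV_def
  have hV0 : V ≠ 0 := (measure_ball_pos volume _ one_pos).ne'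
  have hVt : V ≠ ⊤ := measure_ball_lt_top.ne
  -- lower bound for LHS integral
  have hIlow : ENNReal.ofReal (Lb ^ p * (δ/2)^n) * V
      ≤ ∫⁻ x, ENNReal.ofReal ((‖x‖ ^ β * primeNorm x ^ α * |u x|) ^ p) := by
    have hmono : ∀ x, (ball c (δ/2)).indicator (fun _ => ENNReal.ofReal (Lb ^ p)) x
        ≤ ENNReal.ofReal ((‖x‖ ^ β * primeNorm x ^ α * |u x|) ^ p) := by
      intro x
      by_cases hx : x ∈ ball c (δ/2)
      · rw [Set.indicator_of_mem hx]
        have hx2 : x ∈ closedBall c (δ/2) := ball_subset_closedBall hx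
        have hx' : x ∈ closedBall c δ := closedBall_subset_closedBall (by linarith) hx2
        obtain ⟨h1, h2, h3, h4⟩ := hxb x hx'
        apply ENNReal.ofReal_le_ofReal
        apply Real.rpow_le_rpow hLb.le ?_ hp0.le
        rw [huone x hx2, abs_one, mul_one]
        have e1 : mβ ≤ ‖x‖ ^ β := (rpow_interval (by norm_num) h1 h2).1
        have e2 : a₀ * δ ^ α ≤ primeNorm x ^ α := by
          refine le_trans ?_ (rpow_interval hδ0 h3 h4).1
          rw [Real.mul_rpow (by norm_num : (0:ℝ) ≤ 3) hδ0.le]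
          apply le_min
          · calc a₀ * δ ^ α ≤ 1 * δ ^ α :=
                mul_le_mul_of_nonneg_right (min_le_left _ _) (Real.rpow_pos_of_pos hδ0 α).le
              _ = δ ^ α := one_mul _
          · exact mul_le_mul_of_nonneg_right (min_le_right _ _) (Real.rpow_pos_of_pos hδ0 α).le
        calc Lb = mβ * (a₀ * δ ^ α) := by rw [hLb_def]; ring
          _ ≤ ‖x‖ ^ β * primeNorm x ^ α :=
            mul_le_mul e1 e2 (mul_pos ha₀ (Real.rpow_pos_of_pos hδ0 α)).le
              (Real.rpow_nonneg (norm_nonneg x) β)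
      · rw [Set.indicator_of_notMem hx]
        exact zero_le
    calc ENNReal.ofReal (Lb ^ p * (δ/2)^n) * V
        = ENNReal.ofReal (Lb ^ p) * volume (ball c (δ/2)) := by
          rw [Measure.addHaar_ball volume c (by positivity : (0:ℝ) ≤ δ/2),
            finrank_euclideanSpace_fin, ENNReal.ofReal_mul (by positivity), mul_assoc]
      _ = ∫⁻ x, (ball c (δ/2)).indicator (fun _ => ENNReal.ofReal (Lb ^ p)) x :=
          (lintegral_indicator_const measurableSet_ball _).symm
      _ ≤ _ := lintegral_mono hmono
  -- upper bound for RHS integral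
  have hUb_eq : Mγ * (b₀ * δ ^ (α' + 1)) * (M / δ) = Ub := by
    rw [Real.rpow_add_one hδ0.ne', hUb_def]
    field_simp
  have hJhigh : (∫⁻ x, ENNReal.ofReal
        ((‖x‖ ^ (β + α - α') * primeNorm x ^ (α' + 1) * ‖fderiv ℝ u x‖) ^ p))
      ≤ ENNReal.ofReal (Ub ^ p * (2*δ)^n) * V := by
    have hmono : ∀ x, ENNReal.ofReal
        ((‖x‖ ^ (β + α - α') * primeNorm x ^ (α' + 1) * ‖fderiv ℝ u x‖) ^ p)
        ≤ (closedBall c δ).indicator (fun _ => ENNReal.ofReal (Ub ^ p)) x := by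
      intro x
      by_cases hx : x ∈ closedBall c δ
      · rw [Set.indicator_of_mem hx]
        obtain ⟨h1, h2, h3, h4⟩ := hxb x hx
        apply ENNReal.ofReal_le_ofReal
        apply Real.rpow_le_rpow (mul_nonneg (mul_nonneg (Real.rpow_nonneg (norm_nonneg _) _)
          (Real.rpow_nonneg (primeNorm_nonneg _) _)) (norm_nonneg _)) ?_ hp0.le
        rw [← hUb_eq]
        have e1 : ‖x‖ ^ (β + α - α') ≤ Mγ := (rpow_interval (by norm_num) h1 h2).2
        have e2 : primeNorm x ^ (α' + 1) ≤ b₀ * δ ^ (α' + 1) := by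
          refine ((rpow_interval hδ0 h3 h4).2).trans ?_
          rw [Real.mul_rpow (by norm_num : (0:ℝ) ≤ 3) hδ0.le]
          apply max_le
          · calc δ ^ (α' + 1) = 1 * δ ^ (α' + 1) := (one_mul _).symm
              _ ≤ b₀ * δ ^ (α' + 1) :=
                mul_le_mul_of_nonneg_right (le_max_left _ _) (Real.rpow_pos_of_pos hδ0 _).le
          · exact mul_le_mul_of_nonneg_right (le_max_right _ _) (Real.rpow_pos_of_pos hδ0 _).le
        exact mul_le_mul (mul_le_mul e1 e2 (Real.rpow_nonneg (primeNorm_nonneg x) _) hMγ.le)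
          (hfd x) (norm_nonneg _)
          (mul_nonneg hMγ.le (mul_nonneg hb₀.le (Real.rpow_nonneg hδ0.le _)))
      · rw [Set.indicator_of_notMem hx, hfd0 x hx, norm_zero, mul_zero,
          Real.zero_rpow hp0.ne', ENNReal.ofReal_zero]
    calc (∫⁻ x, ENNReal.ofReal
          ((‖x‖ ^ (β + α - α') * primeNorm x ^ (α' + 1) * ‖fderiv ℝ u x‖) ^ p))
        ≤ ∫⁻ x, (closedBall c δ).indicator (fun _ => ENNReal.ofReal (Ub ^ p)) x :=
          lintegral_mono hmono
      _ = ENNReal.ofReal (Ub ^ p) * volume (closedBall c δ) :=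
          lintegral_indicator_const measurableSet_closedBall _
      _ ≤ ENNReal.ofReal (Ub ^ p) * volume (ball c (2*δ)) :=
          mul_le_mul_right (measure_mono (closedBall_subset_ball (by linarith))) _
      _ = ENNReal.ofReal (Ub ^ p * (2*δ)^n) * V := by
          rw [Measure.addHaar_ball volume c (by positivity : (0:ℝ) ≤ 2*δ),
            finrank_euclideanSpace_fin, ENNReal.ofReal_mul (by positivity), mul_assoc]
  -- the key real inequality
  have hBA : (C ^ p * (Mγ * b₀ * M) ^ p * (2:ℝ) ^ n) * δ ^ q < (mβ * a₀) ^ p * (1/2:ℝ) ^ n :=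
    (lt_div_iff₀' hc₁).mp hδq
  have hkey : C ^ p * (Ub ^ p * (2*δ)^n) < Lb ^ p * (δ/2)^n := by
    have e1 : Ub ^ p = (Mγ * b₀ * M) ^ p * (δ ^ (α * p) * δ ^ q) := by
      rw [hUb_def, Real.mul_rpow (by positivity) (Real.rpow_nonneg hδ0.le _),
        ← Real.rpow_mul hδ0.le,
        show α' * p = α * p + q by rw [hq_def]; ring, Real.rpow_add hδ0]
    have e2 : Lb ^ p = (mβ * a₀) ^ p * δ ^ (α * p) := by
      rw [hLb_def, Real.mul_rpow (by positivity) (Real.rpow_nonneg hδ0.le _),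
        ← Real.rpow_mul hδ0.le]
    have hA : (0:ℝ) < δ ^ (α * p) := Real.rpow_pos_of_pos hδ0 _
    have hD : (0:ℝ) < δ ^ n := pow_pos hδ0 n
    rw [e1, e2]
    calc C ^ p * ((Mγ * b₀ * M) ^ p * (δ ^ (α * p) * δ ^ q) * (2*δ)^n)
        = ((C ^ p * (Mγ * b₀ * M) ^ p * (2:ℝ) ^ n) * δ ^ q) * (δ ^ (α * p) * δ ^ n) := by
          rw [mul_pow]; ring
      _ < ((mβ * a₀) ^ p * (1/2:ℝ) ^ n) * (δ ^ (α * p) * δ ^ n) :=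
          mul_lt_mul_of_pos_right hBA (mul_pos hA hD)
      _ = (mβ * a₀) ^ p * δ ^ (α * p) * (δ/2)^n := by
          rw [div_pow, div_pow]; field_simp; ring
  -- wrap up in ENNReal
  have hXpos : 0 < Lb ^ p * (δ/2)^n :=
    mul_pos (Real.rpow_pos_of_pos hLb p) (pow_pos (by linarith) n)
  have h1p : (0:ℝ) < 1/p := by positivity
  rw [gt_iff_lt]
  calc ENNReal.ofReal C * (∫⁻ x, ENNReal.ofReal
        ((‖x‖ ^ (β + α - α') * primeNorm x ^ (α' + 1) * ‖fderiv ℝ u x‖) ^ p)) ^ (1/p)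
      ≤ ENNReal.ofReal C * (ENNReal.ofReal (Ub ^ p * (2*δ)^n) * V) ^ (1/p) :=
        mul_le_mul_right (ENNReal.rpow_le_rpow hJhigh h1p.le) _
    _ = (ENNReal.ofReal (C ^ p) * (ENNReal.ofReal (Ub ^ p * (2*δ)^n) * V)) ^ (1/p) := by
        conv_rhs => rw [ENNReal.mul_rpow_of_nonneg _ _ h1p.le]
        congr 1
        rw [← ENNReal.ofReal_rpow_of_pos hC, ← ENNReal.rpow_mul,
          mul_one_div_cancel hp0.ne', ENNReal.rpow_one]
    _ < (ENNReal.ofReal (Lb ^ p * (δ/2)^n) * V) ^ (1/p) := by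
        apply ENNReal.rpow_lt_rpow ?_ h1p
        rw [← mul_assoc, ← ENNReal.ofReal_mul (Real.rpow_nonneg hC.le p)]
        exact ENNReal.mul_lt_mul_left hV0 hVt
          ((ENNReal.ofReal_lt_ofReal_iff hXpos).mpr hkey)
    _ ≤ (∫⁻ x, ENNReal.ofReal ((‖x‖ ^ β * primeNorm x ^ α * |u x|) ^ p)) ^ (1/p) :=
        ENNReal.rpow_le_rpow hIlow h1p.le
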